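/- arXiv:2507.18875 — 2 statements merged into one kernel-verified Lean document; each statement's English description precedes it below -/
import Mathlib

section
/- Let β : ℕ → ℝ be a variance schedule and suppose there exists c > 0 such that c ≤ β_n < 1 for all n ≥ 1. Set α_n = 1 − β_n and ᾱ_n = ∏_{i=1}^{n} α_i. Then ᾱ_n → 0 as n → ∞, and for every fixed x₀ ∈ ℝ the Gaussian measures N(√(ᾱ_n)·x₀, 1 − ᾱ_n) converge weakly (in distribution) to the standard Gaussian measure N(0,1) as n → ∞. In other words, the marginal distribution of the DDPM forward chain started from x₀ approaches the standard Gaussian distribution as the number of noising steps tends to infinity. -/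
open MeasureTheory ProbabilityTheory Filter

open scoped NNReal ENNReal

/-- Pointwise lower bound for a Gaussian pdf in terms of the standard Gaussian pdf,
on a compact interval `[-K, K]`. -/
lemma gaussianPDFReal_affine_lower_bound (m v K x : ℝ) (hv : 0 < v) (hK : 0 ≤ K)
    (hx : x ∈ Set.Icc (-K) K) :
    (Real.sqrt v)⁻¹ *
        Real.exp (-((K ^ 2 * |v - 1| + 2 * (K * |m|) + m ^ 2) / (2 * v))) *
        gaussianPDFReal 0 1 x
      ≤ gaussianPDFReal m (Real.toNNReal v) x := by
  have hπ : (0 : ℝ) < 2 * Real.pi := by positivity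
  have hcoe : ((Real.toNNReal v : ℝ≥0) : ℝ) = v := Real.coe_toNNReal _ hv.le
  have hxK : |x| ≤ K := abs_le.2 ⟨hx.1, hx.2⟩
  have hx2 : x ^ 2 ≤ K ^ 2 := sq_le_sq' hx.1 hx.2
  set δ : ℝ := (K ^ 2 * |v - 1| + 2 * (K * |m|) + m ^ 2) / (2 * v) with hδ
  have key : Real.exp (-δ) * Real.exp (- x ^ 2 / 2) ≤
      Real.exp (- (x - m) ^ 2 / (2 * v)) := by
    rw [← Real.exp_add, Real.exp_le_exp]
    have f1 : x ^ 2 * (1 - v) ≤ K ^ 2 * |v - 1| := by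
      rcases le_total v 1 with h | h
      · rw [abs_of_nonpos (by linarith)]
        have h1 : 0 ≤ 1 - v := by linarith
        nlinarith
      · have h1 : x ^ 2 * (1 - v) ≤ 0 :=
          mul_nonpos_of_nonneg_of_nonpos (sq_nonneg x) (by linarith)
        have h2 : 0 ≤ K ^ 2 * |v - 1| := by positivity
        linarith
    have f2 : -(2 * (x * m)) ≤ 2 * (K * |m|) := by
      have h1 : |x * m| ≤ K * |m| := by
        rw [abs_mul]
        exact mul_le_mul_of_nonneg_right hxK (abs_nonneg m)
      have h2 := neg_abs_le (x * m)
      linarith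
    have goal' : (x - m) ^ 2 ≤ K ^ 2 * |v - 1| + 2 * (K * |m|) + m ^ 2 + x ^ 2 * v := by
      nlinarith
    have h2v : (0 : ℝ) < 2 * v := by linarith
    have h8 : (x - m) ^ 2 / (2 * v) ≤
        (K ^ 2 * |v - 1| + 2 * (K * |m|) + m ^ 2) / (2 * v) + x ^ 2 * v / (2 * v) := by
      rw [← add_div]
      gcongr
    have h9 : x ^ 2 * v / (2 * v) = x ^ 2 / 2 := by
      field_simp
    rw [h9] at h8
    rw [hδ]
    ring_nf at h8 ⊢
    linarith
  simp only [gaussianPDFReal, hcoe, NNReal.coe_one, mul_one, sub_zero]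
  have hsplit : (2 * Real.pi * v) = (2 * Real.pi) * v := by ring
  rw [hsplit, Real.sqrt_mul hπ.le v, mul_inv]
  calc (Real.sqrt v)⁻¹ * Real.exp (-δ) *
        ((Real.sqrt (2 * Real.pi))⁻¹ * Real.exp (- x ^ 2 / 2))
      = ((Real.sqrt (2 * Real.pi))⁻¹ * (Real.sqrt v)⁻¹) *
          (Real.exp (-δ) * Real.exp (- x ^ 2 / 2)) := by ring
    _ ≤ ((Real.sqrt (2 * Real.pi))⁻¹ * (Real.sqrt v)⁻¹) *
          Real.exp (- (x - m) ^ 2 / (2 * v)) := by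
        refine mul_le_mul_of_nonneg_left key (by positivity)

/-- If the variance schedule satisfies `c ≤ β_n < 1` for some `c > 0`, then
`ᾱ_n = ∏_{i=1}^n (1 - β_i) → 0`, and the forward DDPM marginals
`N(√ᾱ_n · x₀, 1 - ᾱ_n)` converge weakly to the standard Gaussian `N(0,1)`. -/
theorem ddpm_marginal_tendsto_stdGaussian
    (β : ℕ → ℝ) (c : ℝ) (hc : 0 < c)
    (hβ : ∀ n : ℕ, 1 ≤ n → c ≤ β n ∧ β n < 1)
    (x₀ : ℝ) :
    Tendsto (fun n : ℕ => ∏ i ∈ Finset.Icc 1 n, (1 - β i)) atTop (nhds (0 : ℝ)) ∧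
    Tendsto
      (fun n : ℕ =>
        (⟨gaussianReal (Real.sqrt (∏ i ∈ Finset.Icc 1 n, (1 - β i)) * x₀)
            (Real.toNNReal (1 - ∏ i ∈ Finset.Icc 1 n, (1 - β i))),
          inferInstance⟩ : ProbabilityMeasure ℝ))
      atTop
      (@nhds (ProbabilityMeasure ℝ) _ (⟨gaussianReal 0 1, inferInstance⟩ : ProbabilityMeasure ℝ)) := by
  set a : ℕ → ℝ := fun n => ∏ i ∈ Finset.Icc 1 n, (1 - β i) with ha
  have hc1 : c < 1 := lt_of_le_of_lt (hβ 1 le_rfl).1 (hβ 1 le_rfl).2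
  have ha_nonneg : ∀ n, 0 ≤ a n := fun n =>
    Finset.prod_nonneg fun i hi => by
      have := (hβ i (Finset.mem_Icc.mp hi).1).2; linarith
  have ha_le : ∀ n, a n ≤ (1 - c) ^ n := by
    intro n
    calc a n ≤ ∏ _i ∈ Finset.Icc 1 n, (1 - c) := by
          refine Finset.prod_le_prod (fun i hi => ?_) (fun i hi => ?_)
          · have := (hβ i (Finset.mem_Icc.mp hi).1).2; linarith
          · have := (hβ i (Finset.mem_Icc.mp hi).1).1; linarith
      _ = (1 - c) ^ n := by rw [Finset.prod_const, Nat.card_Icc]; norm_num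
  have hα : Tendsto a atTop (nhds 0) := by
    refine tendsto_of_tendsto_of_tendsto_of_le_of_le tendsto_const_nhds
      (tendsto_pow_atTop_nhds_zero_of_lt_one (by linarith) (by linarith))
      ha_nonneg ha_le
  refine ⟨hα, ?_⟩
  -- notation
  set m : ℕ → ℝ := fun n => Real.sqrt (a n) * x₀ with hm_def
  set vr : ℕ → ℝ := fun n => 1 - a n with hvr_def
  have hvr_pos : ∀ n, 1 ≤ n → c ≤ vr n := by
    intro n hn
    have h1 : a n ≤ (1 - c) ^ n := ha_le n
    have h2 : (1 - c) ^ n ≤ (1 - c) ^ 1 :=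
      pow_le_pow_of_le_one (by linarith) (by linarith) hn
    simp only [pow_one] at h2
    simp only [hvr_def]; linarith
  have hm_tendsto : Tendsto m atTop (nhds 0) := by
    have h2 : Tendsto (fun n => Real.sqrt (a n)) atTop (nhds 0) := by
      simpa [Function.comp_def] using (Real.continuous_sqrt.continuousAt.tendsto.comp hα)
    simpa using h2.mul_const x₀
  have hvr_tendsto : Tendsto vr atTop (nhds 1) := by
    simpa using (tendsto_const_nhds (x := (1:ℝ))).sub hα
  set μstd : Measure ℝ := gaussianReal 0 1 with hμstd
  set ν : ℕ → Measure ℝ := fun n => gaussianReal (m n) (Real.toNNReal (vr n)) with hν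
  refine ProbabilityMeasure.tendsto_iff_tendsto_charFun.2 fun t => ?_
  change Tendsto (fun n => charFun (gaussianReal (m n) (Real.toNNReal (vr n))) t) atTop
    (nhds (charFun (gaussianReal 0 1) t))
  simp only [charFun_gaussianReal]
  have hv2 : Tendsto (fun n => Real.toNNReal (vr n)) atTop (nhds (Real.toNNReal 1)) :=
    (continuous_real_toNNReal.tendsto 1).comp hvr_tendsto
  have hcont : Continuous (fun p : ℝ × ℝ≥0 =>
      Complex.exp (t * (p.1 : ℂ) * Complex.I - ((p.2 : ℝ) : ℂ) * t ^ 2 / 2)) := by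
    fun_prop
  have := (hcont.tendsto (0, Real.toNNReal 1)).comp (hm_tendsto.prodMk_nhds hv2)
  simpa [Function.comp_def, m, vr, a] using this
end

section
/- Let t ≥ 1, let ᾱ_{t−1}, α_t ∈ (0,1), set β_t = 1 − α_t and ᾱ_t = α_t·ᾱ_{t−1}, and fix x₀ ∈ ℝ. Let ε and Z be independent standard Gaussian random variables, and define X_{t−1} = √(ᾱ_{t−1})·x₀ + √(1−ᾱ_{t−1})·ε and X_t = √(α_t)·X_{t−1} + √(β_t)·Z. Then the pair (X_{t−1}, X_t) is jointly Gaussian, and the conditional distribution of X_{t−1} given X_t = x is the Gaussian distribution with mean μ̃_t(x, x₀) = (√(α_t)(1−ᾱ_{t−1})·x + √(ᾱ_{t−1})·β_t·x₀) / (1 − ᾱ_t) and variance β̃_t = (1 − ᾱ_{t−1})·β_t / (1 − ᾱ_t). -/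
open MeasureTheory ProbabilityTheory

namespace DDPMAux


/-- Rotation of the plane as a measurable equivalence. -/
noncomputable def rot (c d : ℝ) (h : c^2 + d^2 = 1) : (ℝ × ℝ) ≃ᵐ (ℝ × ℝ) where
  toFun p := (c * p.1 + d * p.2, -d * p.1 + c * p.2)
  invFun p := (c * p.1 - d * p.2, d * p.1 + c * p.2)
  left_inv p := by
    ext
    · show c * (c * p.1 + d * p.2) - d * (-d * p.1 + c * p.2) = p.1
      linear_combination p.1 * h
    · show d * (c * p.1 + d * p.2) + c * (-d * p.1 + c * p.2) = p.2
      linear_combination p.2 * h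
  right_inv p := by
    ext
    · show c * (c * p.1 - d * p.2) + d * (d * p.1 + c * p.2) = p.1
      linear_combination p.1 * h
    · show -d * (c * p.1 - d * p.2) + c * (d * p.1 + c * p.2) = p.2
      linear_combination p.2 * h
  measurable_toFun := by
    show Measurable fun p : ℝ × ℝ => (c * p.1 + d * p.2, -d * p.1 + c * p.2)
    fun_prop
  measurable_invFun := by
    show Measurable fun p : ℝ × ℝ => (c * p.1 - d * p.2, d * p.1 + c * p.2)
    fun_prop

/-- The linear map version of the rotation. -/
noncomputable def rotL (c d : ℝ) : (ℝ × ℝ) →ₗ[ℝ] (ℝ × ℝ) where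
  toFun p := (c * p.1 + d * p.2, -d * p.1 + c * p.2)
  map_add' p q := by ext <;> simp <;> ring
  map_smul' r p := by ext <;> simp <;> ring

lemma rotL_det (c d : ℝ) : LinearMap.det (rotL c d) = c^2 + d^2 := by
  rw [← LinearMap.det_toMatrix (Module.Basis.finTwoProd ℝ)]
  have : LinearMap.toMatrix (Module.Basis.finTwoProd ℝ) (Module.Basis.finTwoProd ℝ) (rotL c d)
      = !![c, d; -d, c] := by
    ext i j
    rw [LinearMap.toMatrix_apply]
    fin_cases i <;> fin_cases j <;>
      simp [rotL, Module.Basis.finTwoProd_zero, Module.Basis.finTwoProd_one, Module.Basis.coe_finTwoProd_repr] <;> ring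
  rw [this, Matrix.det_fin_two_of]
  ring

lemma volume_map_rot (c d : ℝ) (h : c^2 + d^2 = 1) :
    (volume : Measure (ℝ × ℝ)).map (rot c d h) = volume := by
  have hdet : LinearMap.det (rotL c d) = 1 := by rw [rotL_det, h]
  have := Measure.map_linearMap_addHaar_eq_smul_addHaar (volume : Measure (ℝ × ℝ))
    (f := rotL c d) (by rw [hdet]; norm_num)
  have hco : ⇑(rotL c d) = ⇑(rot c d h) := rfl
  rw [hco] at this
  rw [this, hdet]
  simp


noncomputable def f2 : ℝ × ℝ → ENNReal := fun p => gaussianPDF 0 1 p.1 * gaussianPDF 0 1 p.2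

lemma measurable_f2 : Measurable f2 :=
  ((measurable_gaussianPDF 0 1).comp measurable_fst).mul
    ((measurable_gaussianPDF 0 1).comp measurable_snd)

/-- The two–dimensional standard Gaussian as a density against Lebesgue. -/
lemma std2_eq_withDensity :
    (gaussianReal 0 1).prod (gaussianReal 0 1) = (volume : Measure (ℝ × ℝ)).withDensity f2 := by
  rw [Measure.volume_eq_prod]
  refine (Measure.prod_eq fun s t hs ht => ?_)
  rw [withDensity_apply _ (hs.prod ht), ← Measure.prod_restrict]
  simp only [f2]
  rw [MeasureTheory.lintegral_prod_mul (measurable_gaussianPDF 0 1).aemeasurable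
    (measurable_gaussianPDF 0 1).aemeasurable]
  rw [gaussianReal_apply 0 one_ne_zero s, gaussianReal_apply 0 one_ne_zero t]

lemma f2_rot_invariant (c d : ℝ) (h : c^2 + d^2 = 1) (p : ℝ × ℝ) :
    f2 ((rot c d h).symm p) = f2 p := by
  have key : ∀ x y : ℝ, gaussianPDF 0 1 x * gaussianPDF 0 1 y
      = ENNReal.ofReal ((Real.sqrt (2 * Real.pi * 1))⁻¹ * (Real.sqrt (2 * Real.pi * 1))⁻¹
          * Real.exp (-(x^2 + y^2) / 2)) := by
    intro x y
    rw [gaussianPDF, gaussianPDF, ← ENNReal.ofReal_mul (gaussianPDFReal_nonneg 0 1 x)]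
    congr 1
    simp only [gaussianPDFReal, NNReal.coe_one]
    rw [mul_mul_mul_comm, ← Real.exp_add]
    congr 1
    ring
  show gaussianPDF 0 1 (c * p.1 - d * p.2) * gaussianPDF 0 1 (d * p.1 + c * p.2)
      = gaussianPDF 0 1 p.1 * gaussianPDF 0 1 p.2
  rw [key, key]
  congr 2
  have : (c * p.1 - d * p.2)^2 + (d * p.1 + c * p.2)^2 = p.1^2 + p.2^2 := by
    linear_combination (p.1^2 + p.2^2) * h
  rw [this]

/-- Pushforward of `withDensity` under a measurable equivalence. -/
lemma map_withDensity_equiv {α β : Type*} [MeasurableSpace α] [MeasurableSpace β]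
    (μ : Measure α) (e : α ≃ᵐ β) (f : α → ENNReal) (hf : Measurable f) :
    (μ.withDensity f).map e = (μ.map e).withDensity (f ∘ e.symm) := by
  ext s hs
  rw [Measure.map_apply e.measurable hs, withDensity_apply _ (e.measurable hs),
    withDensity_apply _ hs,
    MeasureTheory.setLIntegral_map hs (hf.comp e.symm.measurable) e.measurable]
  refine setLIntegral_congr_fun (e.measurable hs) (fun x hx => ?_)
  simp

/-- Rotation invariance of the 2D standard Gaussian. -/
lemma std2_map_rot (c d : ℝ) (h : c^2 + d^2 = 1) :
    ((gaussianReal 0 1).prod (gaussianReal 0 1)).map (rot c d h)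
      = (gaussianReal 0 1).prod (gaussianReal 0 1) := by
  rw [std2_eq_withDensity, map_withDensity_equiv _ _ _ measurable_f2, volume_map_rot]
  congr 1
  funext p
  exact f2_rot_invariant c d h p

section C
variable {Ω : Type*} [MeasurableSpace Ω] (P : Measure Ω) [IsProbabilityMeasure P]
  (ε Z : Ω → ℝ) (hε : Measurable ε) (hZ : Measurable Z) (hi : IndepFun ε Z P)
  (hεl : P.map ε = gaussianReal 0 1) (hZl : P.map Z = gaussianReal 0 1)

include hε hZ hi hεl hZl

lemma pair_law : P.map (fun ω => (ε ω, Z ω)) = (gaussianReal 0 1).prod (gaussianReal 0 1) := by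
  rw [(indepFun_iff_map_prod_eq_prod_map_map hε.aemeasurable hZ.aemeasurable).mp hi, hεl, hZl]

lemma affine_law (s t m : ℝ) :
    P.map (fun ω => s * ε ω + t * Z ω + m) = gaussianReal m ((s^2 + t^2).toNNReal) := by
  by_cases h0 : s = 0 ∧ t = 0
  · obtain ⟨hs, ht⟩ := h0
    subst hs; subst ht
    simp only [zero_mul, zero_add]
    have h00 : Real.toNNReal ((0:ℝ)^2 + (0:ℝ)^2) = 0 := by norm_num
    rw [h00, gaussianReal_zero_var, Measure.map_const]
    simp
  · have hr2 : (0:ℝ) < s^2 + t^2 := by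
      rcases not_and_or.mp h0 with h | h <;> positivity
    set r := Real.sqrt (s^2 + t^2) with hr
    have hrpos : 0 < r := Real.sqrt_pos.mpr hr2
    have hrsq : r^2 = s^2 + t^2 := Real.sq_sqrt hr2.le
    have hcd : (s/r)^2 + (t/r)^2 = 1 := by field_simp [hrsq]; linarith
    have hmap1 : P.map (fun ω => (s/r) * ε ω + (t/r) * Z ω) = gaussianReal 0 1 := by
      have hcomp : (fun ω => (s/r) * ε ω + (t/r) * Z ω)
          = (Prod.fst ∘ (rot (s/r) (t/r) hcd)) ∘ (fun ω => (ε ω, Z ω)) := rfl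
      rw [hcomp, ← Measure.map_map (measurable_fst.comp (rot _ _ hcd).measurable)
          (hε.prodMk hZ),
        pair_law P ε Z hε hZ hi hεl hZl,
        ← Measure.map_map measurable_fst (rot _ _ hcd).measurable,
        std2_map_rot, ← Measure.fst]
      exact Measure.fst_prod
    have hcomp2 : (fun ω => s * ε ω + t * Z ω + m)
        = ((fun x => x + m) ∘ (fun x => r * x)) ∘ (fun ω => (s/r) * ε ω + (t/r) * Z ω) := by
      funext ω
      simp only [Function.comp_apply]
      field_simp
    have hmeas : Measurable (fun ω => (s/r) * ε ω + (t/r) * Z ω) := by fun_prop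
    rw [hcomp2, ← Measure.map_map (by fun_prop) hmeas,
      ← Measure.map_map (measurable_add_const m) (measurable_const_mul r), hmap1]
    rw [show (fun x => r * x) = (r * ·) by rfl, gaussianReal_map_const_mul,
      show (fun x => x + m) = (· + m) by rfl, gaussianReal_map_add_const]
    have hm : r * 0 + m = m := by ring
    have hv : ((NNReal.mk (r^2) (sq_nonneg r)) * 1) = Real.toNNReal (s^2 + t^2) := by
      ext; simp [hrsq, max_eq_left hr2.le]
    rw [hm, hv]

lemma orth_pair_law (s1 t1 m1 s2 t2 m2 : ℝ) (horth : s1*s2 + t1*t2 = 0) :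
    P.map (fun ω => (s1 * ε ω + t1 * Z ω + m1, s2 * ε ω + t2 * Z ω + m2))
      = (gaussianReal m1 ((s1^2 + t1^2).toNNReal)).prod
          (gaussianReal m2 ((s2^2 + t2^2).toNNReal)) := by
  by_cases h1 : s1 = 0 ∧ t1 = 0
  · obtain ⟨hs, ht⟩ := h1
    subst hs; subst ht
    simp only [zero_mul, zero_add]
    have h00 : Real.toNNReal ((0:ℝ)^2 + (0:ℝ)^2) = 0 := by norm_num
    rw [h00, gaussianReal_zero_var, Measure.dirac_prod,
      ← affine_law P ε Z hε hZ hi hεl hZl s2 t2 m2,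
      show (fun ω => ((m1:ℝ), s2 * ε ω + t2 * Z ω + m2))
        = (Prod.mk m1) ∘ (fun ω => s2 * ε ω + t2 * Z ω + m2) from rfl,
      ← Measure.map_map measurable_prodMk_left (by fun_prop)]
  by_cases h2 : s2 = 0 ∧ t2 = 0
  · obtain ⟨hs, ht⟩ := h2
    subst hs; subst ht
    simp only [zero_mul, zero_add]
    have h00 : Real.toNNReal ((0:ℝ)^2 + (0:ℝ)^2) = 0 := by norm_num
    rw [h00, gaussianReal_zero_var, Measure.prod_dirac,
      ← affine_law P ε Z hε hZ hi hεl hZl s1 t1 m1,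
      show (fun ω => (s1 * ε ω + t1 * Z ω + m1, (m2:ℝ)))
        = (fun x => (x, m2)) ∘ (fun ω => s1 * ε ω + t1 * Z ω + m1) from rfl,
      ← Measure.map_map (g := fun x : ℝ => (x, m2))
        (f := fun ω => s1 * ε ω + t1 * Z ω + m1)
        (measurable_id.prodMk measurable_const) (by fun_prop)]
  · have hr2 : (0:ℝ) < s1^2 + t1^2 := by
      rcases not_and_or.mp h1 with h | h <;> positivity
    set r := Real.sqrt (s1^2 + t1^2) with hrdef
    have hrpos : 0 < r := Real.sqrt_pos.mpr hr2
    have hrsq : r^2 = s1^2 + t1^2 := Real.sq_sqrt hr2.le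
    have hcd : (s1/r)^2 + (t1/r)^2 = 1 := by field_simp [hrsq]; linarith
    set k := (s1*t2 - t1*s2) / (s1^2 + t1^2) with hkdef
    have hts : t2 = k * s1 := by
      rw [hkdef, div_mul_eq_mul_div, eq_div_iff hr2.ne']
      linear_combination t1 * horth
    have hss' : k * t1 = -s2 := by
      rw [hkdef, div_mul_eq_mul_div, div_eq_iff hr2.ne']
      linear_combination s1 * horth
    have hss : s2 = -k * t1 := by linarith
    have hcomp : (fun ω => (s1 * ε ω + t1 * Z ω + m1, s2 * ε ω + t2 * Z ω + m2))
        = ((Prod.map (fun x => r * x + m1) (fun y => (k*r) * y + m2))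
          ∘ ⇑(rot (s1/r) (t1/r) hcd)) ∘ (fun ω => (ε ω, Z ω)) := by
      funext ω
      show _ = ((r * ((s1/r) * ε ω + (t1/r) * Z ω) + m1),
        ((k*r) * (-(t1/r) * ε ω + (s1/r) * Z ω) + m2))
      rw [hts, hss]
      field_simp
    rw [hcomp, ← Measure.map_map (by fun_prop) (hε.prodMk hZ),
      ← Measure.map_map (by fun_prop) (rot _ _ hcd).measurable,
      pair_law P ε Z hε hZ hi hεl hZl, std2_map_rot,
      ← Measure.map_prod_map _ _
        (show Measurable fun x : ℝ => r * x + m1 by fun_prop)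
        (show Measurable fun y : ℝ => k * r * y + m2 by fun_prop)]
    have hone : ∀ (c m : ℝ), (gaussianReal 0 1).map (fun x => c * x + m)
        = gaussianReal m ((c^2).toNNReal) := by
      intro c m
      rw [show (fun x => c * x + m) = ((· + m) ∘ (c * ·)) by rfl,
        ← Measure.map_map (measurable_add_const m) (measurable_const_mul c),
        gaussianReal_map_const_mul, gaussianReal_map_add_const]
      congr 1
      · ring
      · ext; simp [Real.toNNReal, max_eq_left (sq_nonneg c)]
    rw [hone, hone]
    congr 2
    · ext; simp [max_eq_left hr2.le, max_eq_left (sq_nonneg r), hrsq]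
    · ext
      have h1' : s2^2 + t2^2 = k^2 * (s1^2 + t1^2) := by rw [hts, hss]; ring
      have : (k*r)^2 = s2^2 + t2^2 := by rw [h1', ← hrsq]; ring
      simp [max_eq_left (sq_nonneg (k*r)), this,
        max_eq_left (by positivity : (0:ℝ) ≤ s2^2 + t2^2)]

end C

section D

/-- The kernel `x ↦ gaussianReal (mW + A x) vW`. -/
noncomputable def shiftKer (A mW : ℝ) (vW : NNReal) : Kernel ℝ ℝ :=
  Kernel.map
    ((Kernel.deterministic (fun x : ℝ => A * x) (by fun_prop)) ×ₖ
      (Kernel.const ℝ (gaussianReal mW vW)))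
    (fun p : ℝ × ℝ => p.1 + p.2)

instance shiftKer_isMarkov (A mW : ℝ) (vW : NNReal) : IsMarkovKernel (shiftKer A mW vW) :=
  Kernel.IsMarkovKernel.map _ (by fun_prop)

lemma shiftKer_apply' (A mW : ℝ) (vW : NNReal) (x : ℝ) :
    shiftKer A mW vW x = (gaussianReal mW vW).map (fun w => A * x + w) := by
  rw [shiftKer, Kernel.map_apply _ (by fun_prop), Kernel.prod_apply,
    Kernel.deterministic_apply, Kernel.const_apply, Measure.dirac_prod,
    Measure.map_map (by fun_prop) measurable_prodMk_left]
  rfl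

lemma shiftKer_apply (A mW : ℝ) (vW : NNReal) (x : ℝ) :
    shiftKer A mW vW x = gaussianReal (mW + A * x) vW := by
  rw [shiftKer_apply', show (fun w : ℝ => A * x + w) = ((A * x) + ·) from rfl,
    gaussianReal_map_const_add]

lemma prod_map_eq_compProd (A mW : ℝ) (vW : NNReal) (ν : Measure ℝ) [IsProbabilityMeasure ν] :
    (ν.prod (gaussianReal mW vW)).map (fun p : ℝ × ℝ => (p.1, A * p.1 + p.2))
      = ν ⊗ₘ (shiftKer A mW vW) := by
  ext s hs
  have hF : Measurable (fun p : ℝ × ℝ => (p.1, A * p.1 + p.2)) := by fun_prop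
  rw [Measure.map_apply hF hs, Measure.prod_apply (hF hs), Measure.compProd_apply hs]
  congr 1
  funext x
  rw [shiftKer_apply', Measure.map_apply (by fun_prop) (measurable_prodMk_left hs)]
  rfl

end D

end DDPMAux

/-- In the DDPM forward process, with `X_{t-1} = √ᾱ_{t-1} x₀ + √(1-ᾱ_{t-1}) ε` and
`X_t = √α_t X_{t-1} + √β_t Z` (where `β_t = 1 - α_t`, `ᾱ_t = α_t ᾱ_{t-1}`, and `ε, Z`
independent standard Gaussians), the pair `(X_{t-1}, X_t)` is jointly Gaussian (every linear
combination has a Gaussian law), and the conditional distribution of `X_{t-1}` given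
`X_t = x` is Gaussian with mean
`μ̃_t(x,x₀) = (√α_t (1-ᾱ_{t-1}) x + √ᾱ_{t-1} β_t x₀)/(1-ᾱ_t)` and variance
`β̃_t = (1-ᾱ_{t-1}) β_t/(1-ᾱ_t)`. -/
theorem ddpm_posterior_gaussian
    {Ω : Type*} [MeasurableSpace Ω] (P : Measure Ω) [IsProbabilityMeasure P]
    (t : ℕ) (ht : 1 ≤ t)
    (abarPrev alpha : ℝ)
    (habarPrev : abarPrev ∈ Set.Ioo (0 : ℝ) 1) (halpha : alpha ∈ Set.Ioo (0 : ℝ) 1)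
    (betat : ℝ) (hbetat : betat = 1 - alpha)
    (abar : ℝ) (habar : abar = alpha * abarPrev)
    (x₀ : ℝ)
    (ε Z : Ω → ℝ) (hεmeas : Measurable ε) (hZmeas : Measurable Z)
    (hindep : IndepFun ε Z P)
    (hεlaw : P.map ε = gaussianReal 0 1) (hZlaw : P.map Z = gaussianReal 0 1)
    (Xprev Xt : Ω → ℝ)
    (hXprev : Xprev = fun ω => Real.sqrt abarPrev * x₀ + Real.sqrt (1 - abarPrev) * ε ω)
    (hXt : Xt = fun ω => Real.sqrt alpha * Xprev ω + Real.sqrt betat * Z ω) :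
    (∀ a b : ℝ, ∃ (m : ℝ) (v : NNReal),
      P.map (fun ω => a * Xprev ω + b * Xt ω) = gaussianReal m v) ∧
    (∀ᵐ x ∂(P.map Xt),
      condDistrib Xprev Xt P x =
        gaussianReal
          ((Real.sqrt alpha * (1 - abarPrev) * x + Real.sqrt abarPrev * betat * x₀)
            / (1 - abar))
          (Real.toNNReal ((1 - abarPrev) * betat / (1 - abar)))) := by
  obtain ⟨hap0, hap1⟩ := habarPrev
  obtain ⟨hal0, hal1⟩ := halpha
  set sa := Real.sqrt alpha with hsa
  set sp := Real.sqrt abarPrev with hsp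
  set sq := Real.sqrt (1 - abarPrev) with hsq
  set sb := Real.sqrt betat with hsb
  have hbpos : 0 < betat := by rw [hbetat]; linarith
  have hD : 0 < 1 - abar := by
    rw [habar]; nlinarith
  have hsa2 : sa^2 = alpha := Real.sq_sqrt hal0.le
  have hsp2 : sp^2 = abarPrev := Real.sq_sqrt hap0.le
  have hsq2 : sq^2 = 1 - abarPrev := Real.sq_sqrt (by linarith)
  have hsb2 : sb^2 = betat := Real.sq_sqrt hbpos.le
  -- coefficients
  set D := 1 - abar with hDdef
  set A := sa * (1 - abarPrev) / D with hA
  set u1 := sa * sq with hu1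
  set u2 := sb with hu2
  set mT := sa * sp * x₀ with hmT
  set w1 := sq * betat / D with hw1
  set w2 := -(A * sb) with hw2
  set mW := sp * betat * x₀ / D with hmW
  constructor
  · -- part 1: joint Gaussianity
    intro a b
    refine ⟨(a + b * sa) * sp * x₀,
      Real.toNNReal (((a + b * sa) * sq)^2 + (b * sb)^2), ?_⟩
    have hfun : (fun ω => a * Xprev ω + b * Xt ω)
        = fun ω => ((a + b * sa) * sq) * ε ω + (b * sb) * Z ω + (a + b * sa) * sp * x₀ := by
      funext ω
      rw [hXt, hXprev]
      ring
    rw [hfun]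
    exact DDPMAux.affine_law P ε Z hεmeas hZmeas hindep hεlaw hZlaw _ _ _
  · -- part 2: conditional distribution
    have hXprevmeas : Measurable Xprev := by rw [hXprev]; fun_prop
    have hXtmeas : Measurable Xt := by rw [hXt]; fun_prop
    -- the law of (Xt, Xprev - A Xt)
    have horth : u1 * w1 + u2 * w2 = 0 := by
      rw [hu1, hu2, hw1, hw2, hA]
      field_simp
      linear_combination (sa * betat) * hsq2 - (sa * (1 - abarPrev)) * hsb2
    have hpair : P.map (fun ω => (Xt ω, Xprev ω - A * Xt ω))
        = (gaussianReal mT (Real.toNNReal (u1^2 + u2^2))).prod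
            (gaussianReal mW (Real.toNNReal (w1^2 + w2^2))) := by
      have hfun : (fun ω => (Xt ω, Xprev ω - A * Xt ω))
          = fun ω => (u1 * ε ω + u2 * Z ω + mT, w1 * ε ω + w2 * Z ω + mW) := by
        funext ω
        rw [hXt, hXprev]
        refine Prod.ext ?_ ?_
        · show sa * (sp * x₀ + sq * ε ω) + sb * Z ω = u1 * ε ω + u2 * Z ω + mT
          rw [hu1, hu2, hmT]; ring
        · show (sp * x₀ + sq * ε ω) - A * (sa * (sp * x₀ + sq * ε ω) + sb * Z ω)
            = w1 * ε ω + w2 * Z ω + mW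
          rw [hw1, hw2, hmW, hA]
          field_simp
          linear_combination ((sp*x₀ + sq*ε ω)*(abarPrev - 1)) * hsa2
            - (sp*x₀ + sq*ε ω) * hbetat - (sp*x₀ + sq*ε ω) * habar
      rw [hfun]
      exact DDPMAux.orth_pair_law P ε Z hεmeas hZmeas hindep hεlaw hZlaw _ _ _ _ _ _ horth
    -- identify the joint law as a compProd
    have hjoint : P.map (fun ω => (Xt ω, Xprev ω))
        = (gaussianReal mT (Real.toNNReal (u1^2 + u2^2))) ⊗ₘ
            (DDPMAux.shiftKer A mW (Real.toNNReal (w1^2 + w2^2))) := by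
      rw [← DDPMAux.prod_map_eq_compProd, ← hpair,
        Measure.map_map (by fun_prop) (by fun_prop)]
      congr 1
      funext ω
      show (Xt ω, Xprev ω) = (Xt ω, A * Xt ω + (Xprev ω - A * Xt ω))
      refine Prod.ext rfl ?_
      ring
    have hfstlaw : P.map Xt = gaussianReal mT (Real.toNNReal (u1^2 + u2^2)) := by
      have h1 : P.map Xt = (P.map (fun ω => (Xt ω, Xprev ω))).fst := by
        rw [Measure.fst, Measure.map_map measurable_fst (by fun_prop)]
        rfl
      rw [h1, hjoint, Measure.fst_compProd]
    have hκ : P.map (fun x => (Xt x, Xprev x))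
        = P.map Xt ⊗ₘ DDPMAux.shiftKer A mW (Real.toNNReal (w1^2 + w2^2)) := by
      rw [hfstlaw]
      exact hjoint
    have hae := condDistrib_ae_eq_of_measure_eq_compProd (μ := P) Xt hXprevmeas.aemeasurable
      (κ := DDPMAux.shiftKer A mW (Real.toNNReal (w1^2 + w2^2))) hκ
    filter_upwards [hae] with x hx
    rw [hx, DDPMAux.shiftKer_apply]
    congr 1
    · -- mean
      rw [hmW, hA]
      field_simp
      ring
    · -- variance
      congr 1
      have e1 : w1^2 = (1-abarPrev) * betat^2 / D^2 := by
        rw [hw1, div_pow, mul_pow, hsq2]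
      have e2 : w2^2 = alpha * (1-abarPrev)^2 * betat / D^2 := by
        have h' : w2^2 = A^2 * sb^2 := by rw [hw2]; ring
        rw [h', hsb2, hA, div_pow, mul_pow, hsa2]
        ring
      rw [e1, e2, ← add_div]
      rw [div_eq_div_iff (pow_ne_zero 2 hD.ne') hD.ne']
      rw [hDdef, hbetat, habar]
      ring
end
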